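/- For the generalized PDA G obtained by replicating column λ of a (Λ,F,Z,S) PDA P exactly L_λ times, the number of distinct labeled integers s^{(i)} appearing in G equals Σ_{s=0}^{S−1} max{ L_λ : λ such that s appears in column λ of P }. Hence the delivery load of the shared-cache scheme is R = (1/F)·Σ_{s=0}^{S−1} max{L_λ : s appears in column λ of P}. -/

import Mathlib

/-- A `(K, F, Z, S)` placement delivery array: an `F × K` array whose entries are
either `none` (the star `⋆`) or `some s` with `s < S`, satisfying conditions C1–C3. -/
def IsPDA (K F Z S : ℕ) (P : Fin F → Fin K → Option ℕ) : Prop :=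
  (∀ (j : Fin F) (k : Fin K) (s : ℕ), P j k = some s → s < S) ∧
  (∀ k : Fin K, (Finset.univ.filter (fun j => P j k = none)).card = Z) ∧
  (∀ s < S, ∃ (j : Fin F) (k : Fin K), P j k = some s) ∧
  (∀ (j₁ j₂ : Fin F) (k₁ k₂ : Fin K) (s : ℕ), (j₁, k₁) ≠ (j₂, k₂) →
    P j₁ k₁ = some s → P j₂ k₂ = some s →
    j₁ ≠ j₂ ∧ k₁ ≠ k₂ ∧ P j₁ k₂ = none ∧ P j₂ k₁ = none)

/-- The number of distinct labeled integers `s^{(i)}` appearing in the replicated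
array `G` equals `Σ_{s=0}^{S−1} max{L λ : s appears in column λ of P}`; hence the
delivery load of the shared-cache scheme is this quantity divided by `F`. -/
theorem replicated_gpda_label_count (Λ F Z S : ℕ) (hF : 0 < F)
    (P : Fin F → Fin Λ → Option ℕ) (hP : IsPDA Λ F Z S P)
    (L : Fin Λ → ℕ)
    (G : Fin F → (Σ lam : Fin Λ, Fin (L lam)) → Option (ℕ × ℕ))
    (hG : ∀ (j : Fin F) (lam : Fin Λ) (i : Fin (L lam)),
      G j ⟨lam, i⟩ = (P j lam).map (fun s => (s, (i : ℕ) + 1))) :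
    ((Finset.univ : Finset (Fin F × Σ lam : Fin Λ, Fin (L lam))).biUnion
        (fun p => (G p.1 p.2).toFinset)).card
      = ∑ s ∈ Finset.range S,
          ((Finset.univ.filter (fun lam : Fin Λ => ∃ j : Fin F, P j lam = some s)).sup L) ∧
    (((Finset.univ : Finset (Fin F × Σ lam : Fin Λ, Fin (L lam))).biUnion
        (fun p => (G p.1 p.2).toFinset)).card : ℚ) / F
      = (∑ s ∈ Finset.range S,
          (((Finset.univ.filter (fun lam : Fin Λ => ∃ j : Fin F, P j lam = some s)).sup L : ℕ) : ℚ)) / F := by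
  set M : ℕ → ℕ := fun s =>
    (Finset.univ.filter (fun lam : Fin Λ => ∃ j : Fin F, P j lam = some s)).sup L with hM
  have key : ((Finset.univ : Finset (Fin F × Σ lam : Fin Λ, Fin (L lam))).biUnion
        (fun p => (G p.1 p.2).toFinset))
      = (Finset.range S).biUnion
          (fun s => (Finset.range (M s)).image (fun i => (s, i + 1))) := by
    ext ⟨s, t⟩
    simp only [Finset.mem_biUnion, Finset.mem_univ, true_and, Option.mem_toFinset,
      Option.mem_def, Finset.mem_range, Finset.mem_image]
    constructor
    · rintro ⟨⟨j, lam, i⟩, hmem⟩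
      rw [hG] at hmem
      obtain ⟨s', hs', heq⟩ := Option.map_eq_some_iff.mp hmem
      obtain ⟨rfl, rfl⟩ : s' = s ∧ (i : ℕ) + 1 = t := Prod.mk.injEq .. ▸ heq
      refine ⟨s', hP.1 j lam s' hs', (i : ℕ), ?_, rfl⟩
      have hmemf : lam ∈ Finset.univ.filter
          (fun lam : Fin Λ => ∃ j : Fin F, P j lam = some s') := by
        simp only [Finset.mem_filter, Finset.mem_univ, true_and]
        exact ⟨j, hs'⟩
      have h1 : L lam ≤ M s' := Finset.le_sup hmemf
      exact lt_of_lt_of_le i.2 h1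
    · rintro ⟨s', hsS, i, hi, heq⟩
      obtain ⟨rfl, rfl⟩ : s' = s ∧ i + 1 = t := Prod.mk.injEq .. ▸ heq
      have : i + 1 ≤ M s' := hi
      rw [hM] at this
      rw [Finset.le_sup_iff (Nat.succ_pos i)] at this
      obtain ⟨lam, hlam, hle⟩ := this
      simp only [Finset.mem_filter, Finset.mem_univ, true_and] at hlam
      obtain ⟨j, hj⟩ := hlam
      refine ⟨⟨j, lam, ⟨i, lt_of_lt_of_le (Nat.lt_succ_self i) hle⟩⟩, ?_⟩
      rw [hG, hj]
      rfl
  have hcard : ((Finset.univ : Finset (Fin F × Σ lam : Fin Λ, Fin (L lam))).biUnion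
        (fun p => (G p.1 p.2).toFinset)).card
      = ∑ s ∈ Finset.range S, M s := by
    rw [key, Finset.card_biUnion]
    · refine Finset.sum_congr rfl (fun s _ => ?_)
      rw [Finset.card_image_of_injective _ (fun a b h => by
        simpa using congrArg Prod.snd h), Finset.card_range]
    · intro s₁ _ s₂ _ hne
      rw [Function.onFun_apply, Finset.disjoint_left]
      rintro ⟨a, b⟩ h1 h2
      simp only [Finset.mem_image, Finset.mem_range, Prod.mk.injEq] at h1 h2
      obtain ⟨_, _, rfl, _⟩ := h1
      obtain ⟨_, _, rfl, _⟩ := h2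
      exact hne rfl
  refine ⟨hcard, ?_⟩
  rw [hcard]
  push_cast
  ring
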